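/- Let n ≥ 3, ε > 0 and u_α(r) = ((r² + α²)/α)^((2-n)/2). If k > -n and n = k + 4, then there exist constants 0 < c ≤ C such that for all sufficiently small α ∈ (0, 1/2), c·α^(k+2)·log(1/α) ≤ ∫₀^ε u_α(r)² r^(k+n-1) dr ≤ C·α^(k+2)·log(1/α). -/

import Mathlib

open MeasureTheory

/-- Lee–Parker calculus lemma, case `n = k + 4`: the integral
`∫₀^ε u_α(r)² r^(k+n-1) dr` is comparable to `α^(k+2)·log(1/α)` for small `α`. -/
theorem bubble_integral_asymptotics_case_eq
    (n : ℕ) (hn : 3 ≤ n) (ε : ℝ) (hε : 0 < ε) (k : ℝ) (hk : -(n : ℝ) < k)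
    (hnk : (n : ℝ) = k + 4)
    (u : ℝ → ℝ → ℝ)
    (hu : ∀ α r, u α r = ((r ^ 2 + α ^ 2) / α) ^ ((2 - (n : ℝ)) / 2)) :
    ∃ c C : ℝ, 0 < c ∧ c ≤ C ∧ ∃ α₀ : ℝ, 0 < α₀ ∧ ∀ α : ℝ, 0 < α → α < 1 / 2 → α < α₀ →
      c * α ^ (k + 2) * Real.log (1 / α)
          ≤ (∫ r in (0:ℝ)..ε, (u α r) ^ 2 * r ^ (k + n - 1)) ∧
      (∫ r in (0:ℝ)..ε, (u α r) ^ 2 * r ^ (k + n - 1))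
          ≤ C * α ^ (k + 2) * Real.log (1 / α) := by
  obtain ⟨p, rfl⟩ : ∃ p : ℕ, n = p + 3 := ⟨n - 3, by omega⟩
  have hkval : k = (p : ℝ) - 1 := by push_cast at hnk; linarith
  subst hkval
  have hlog2pos : (0:ℝ) < Real.log 2 := Real.log_pos (by norm_num)
  have hlogε2 : (0:ℝ) ≤ Real.log (1 + ε ^ 2) := Real.log_nonneg (by nlinarith)
  refine ⟨1 / 2 ^ (p + 2), Real.log (1 + ε ^ 2) / (2 * Real.log 2) + 1, by positivity, ?_,
    ε ^ 2, by positivity, ?_⟩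
  · have h1 : (1:ℝ) ≤ 2 ^ (p + 2) := one_le_pow₀ (by norm_num)
    have h2 : (1:ℝ) / 2 ^ (p + 2) ≤ 1 := by
      rw [div_le_one (by positivity)]; exact h1
    have h3 : (0:ℝ) ≤ Real.log (1 + ε ^ 2) / (2 * Real.log 2) := by positivity
    linarith
  intro α hα hα2 hα0
  have hα1 : α < 1 := by linarith
  have hαε : α < ε := by
    rcases le_or_gt 1 ε with h | h
    · linarith
    · nlinarith
  have hlogα : Real.log α < 0 := Real.log_neg hα hα1
  have hlog1α : Real.log (1 / α) = -Real.log α := by rw [one_div, Real.log_inv]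
  have hlog2le : Real.log 2 ≤ Real.log (1 / α) := by
    apply Real.log_le_log (by norm_num)
    rw [le_div_iff₀ hα]; linarith
  have hεlog : Real.log α ≤ 2 * Real.log ε := by
    have := Real.log_le_log hα hα0.le
    rwa [show ε ^ 2 = ε ^ (2:ℕ) by norm_num, Real.log_pow] at this
    -- `Real.log_pow : log (x ^ n) = n * log x`
  -- the rewritten integrand
  set f : ℝ → ℝ := fun r => α ^ (p + 1) * r ^ (2 * p + 1) / (r ^ 2 + α ^ 2) ^ (p + 1) with hf
  have hcont : Continuous f := by
    apply Continuous.div (by fun_prop) (by fun_prop)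
    intro x; positivity
  have hEq : Set.EqOn (fun r => (u α r) ^ 2 * r ^ ((p:ℝ) - 1 + ((p:ℕ) + 3 : ℕ) - 1)) f
      (Set.uIcc 0 ε) := by
    intro r hr
    rw [Set.uIcc_of_le hε.le] at hr
    have hr0 : 0 ≤ r := hr.1
    have hxpos : 0 < (r ^ 2 + α ^ 2) / α := by positivity
    have hexp : (p:ℝ) - 1 + ((p:ℕ) + 3 : ℕ) - 1 = ((2 * p + 1 : ℕ) : ℝ) := by
      push_cast; ring
    simp only [hu, hf]
    rw [hexp, Real.rpow_natCast]
    rw [← Real.rpow_natCast (((r ^ 2 + α ^ 2) / α) ^ ((2 - (((p:ℕ) + 3 : ℕ) : ℝ)) / 2)) 2,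
      ← Real.rpow_mul hxpos.le]
    have hexp2 : (2 - (((p:ℕ) + 3 : ℕ) : ℝ)) / 2 * ((2:ℕ):ℝ) = -(((p + 1 : ℕ)):ℝ) := by
      push_cast; ring
    rw [hexp2, Real.rpow_neg hxpos.le, Real.rpow_natCast, div_pow]
    rw [div_eq_mul_inv (α ^ (p+1) * r ^ (2*p+1)), inv_div]
    ring
  have hInt : (∫ r in (0:ℝ)..ε, (u α r) ^ 2 * r ^ ((p:ℝ) - 1 + ((p:ℕ) + 3 : ℕ) - 1))
      = ∫ r in (0:ℝ)..ε, f r := intervalIntegral.integral_congr hEq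
  rw [hInt]
  have hαpow : α ^ ((p:ℝ) - 1 + 2) = α ^ (p + 1) := by
    rw [show (p:ℝ) - 1 + 2 = ((p + 1 : ℕ) : ℝ) by push_cast; ring, Real.rpow_natCast]
  constructor
  · -- lower bound
    have hsplit : (∫ r in (0:ℝ)..ε, f r)
        = (∫ r in (0:ℝ)..α, f r) + ∫ r in α..ε, f r :=
      (intervalIntegral.integral_add_adjacent_intervals (hcont.intervalIntegrable 0 α)
        (hcont.intervalIntegrable α ε)).symm
    have h0α : 0 ≤ ∫ r in (0:ℝ)..α, f r := by
      apply intervalIntegral.integral_nonneg hα.le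
      intro x hx
      exact div_nonneg (mul_nonneg (by positivity) (pow_nonneg hx.1 _)) (by positivity)
    have hg : IntervalIntegrable (fun r : ℝ => α ^ (p + 1) / 2 ^ (p + 1) * (1 / r))
        volume α ε := by
      apply ContinuousOn.intervalIntegrable
      apply ContinuousOn.mul continuousOn_const
      apply ContinuousOn.div continuousOn_const continuousOn_id
      intro x hx
      rw [Set.uIcc_of_le hαε.le] at hx
      exact ne_of_gt (lt_of_lt_of_le hα hx.1)
    have hmono2 : (∫ r in α..ε, α ^ (p + 1) / 2 ^ (p + 1) * (1 / r)) ≤ ∫ r in α..ε, f r := by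
      apply intervalIntegral.integral_mono_on hαε.le hg (hcont.intervalIntegrable α ε)
      intro r hr
      have hrα : α ≤ r := hr.1
      have hrpos : 0 < r := lt_of_lt_of_le hα hrα
      have key : (r ^ 2 + α ^ 2) ^ (p + 1) ≤ 2 ^ (p + 1) * (r ^ (2 * p + 1) * r) := by
        have h1 : (r ^ 2 + α ^ 2) ^ (p + 1) ≤ (2 * r ^ 2) ^ (p + 1) := by
          apply pow_le_pow_left₀ (by positivity)
          nlinarith
        calc (r ^ 2 + α ^ 2) ^ (p + 1) ≤ (2 * r ^ 2) ^ (p + 1) := h1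
          _ = 2 ^ (p + 1) * (r ^ (2 * p + 1) * r) := by rw [mul_pow, ← pow_mul]; ring
      simp only [hf]
      calc α ^ (p + 1) / 2 ^ (p + 1) * (1 / r) = α ^ (p + 1) / (2 ^ (p + 1) * r) := by
            rw [div_mul_div_comm, mul_one]
        _ ≤ α ^ (p + 1) * r ^ (2 * p + 1) / (r ^ 2 + α ^ 2) ^ (p + 1) := by
            rw [div_le_div_iff₀ (by positivity) (by positivity)]
            calc α ^ (p + 1) * (r ^ 2 + α ^ 2) ^ (p + 1)
                ≤ α ^ (p + 1) * (2 ^ (p + 1) * (r ^ (2 * p + 1) * r)) :=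
                  mul_le_mul_of_nonneg_left key (by positivity)
              _ = α ^ (p + 1) * r ^ (2 * p + 1) * (2 ^ (p + 1) * r) := by ring
    have hval : (∫ r in α..ε, α ^ (p + 1) / 2 ^ (p + 1) * (1 / r))
        = α ^ (p + 1) / 2 ^ (p + 1) * (Real.log ε - Real.log α) := by
      rw [intervalIntegral.integral_const_mul, integral_one_div, Real.log_div hε.ne' hα.ne']
      rw [Set.uIcc_of_le hαε.le]
      intro h
      exact absurd h.1 (by simp [hα])
    rw [hαpow, hlog1α]
    have hB : (0:ℝ) < 2 ^ (p + 1) := by positivity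
    have hA : (0:ℝ) < α ^ (p + 1) := by positivity
    have hstep : 1 / 2 ^ (p + 2) * α ^ (p + 1) * -Real.log α
        ≤ α ^ (p + 1) / 2 ^ (p + 1) * (Real.log ε - Real.log α) := by
      have h : -Real.log α ≤ 2 * (Real.log ε - Real.log α) := by linarith
      calc 1 / 2 ^ (p + 2) * α ^ (p + 1) * -Real.log α
          = 1 / 2 ^ (p + 2) * α ^ (p + 1) * -Real.log α := rfl
        _ ≤ 1 / 2 ^ (p + 2) * α ^ (p + 1) * (2 * (Real.log ε - Real.log α)) := by
            apply mul_le_mul_of_nonneg_left h (by positivity)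
        _ = α ^ (p + 1) / 2 ^ (p + 1) * (Real.log ε - Real.log α) := by
            rw [pow_succ]
            field_simp
    calc 1 / 2 ^ (p + 2) * α ^ (p + 1) * -Real.log α
        ≤ α ^ (p + 1) / 2 ^ (p + 1) * (Real.log ε - Real.log α) := hstep
      _ = ∫ r in α..ε, α ^ (p + 1) / 2 ^ (p + 1) * (1 / r) := hval.symm
      _ ≤ ∫ r in α..ε, f r := hmono2
      _ ≤ ∫ r in (0:ℝ)..ε, f r := by rw [hsplit]; linarith
  · -- upper bound
    have hgcont : Continuous (fun r : ℝ => α ^ (p + 1) * (r / (r ^ 2 + α ^ 2))) := by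
      apply Continuous.mul continuous_const
      apply Continuous.div continuous_id (by fun_prop)
      intro x; positivity
    have hmono : (∫ r in (0:ℝ)..ε, f r)
        ≤ ∫ r in (0:ℝ)..ε, α ^ (p + 1) * (r / (r ^ 2 + α ^ 2)) := by
      apply intervalIntegral.integral_mono_on hε.le (hcont.intervalIntegrable 0 ε)
        (hgcont.intervalIntegrable 0 ε)
      intro r hr
      have hr0 : 0 ≤ r := hr.1
      simp only [hf]
      have key : r ^ (2 * p + 1) * (r ^ 2 + α ^ 2) ≤ r * (r ^ 2 + α ^ 2) ^ (p + 1) := by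
        have h2 : (r ^ 2) ^ p ≤ (r ^ 2 + α ^ 2) ^ p := by
          apply pow_le_pow_left₀ (by positivity); nlinarith
        calc r ^ (2 * p + 1) * (r ^ 2 + α ^ 2) = (r * (r ^ 2) ^ p) * (r ^ 2 + α ^ 2) := by
              rw [pow_succ, ← pow_mul]; ring
          _ ≤ (r * (r ^ 2 + α ^ 2) ^ p) * (r ^ 2 + α ^ 2) := by
              apply mul_le_mul_of_nonneg_right
                (mul_le_mul_of_nonneg_left h2 hr0) (by positivity)
          _ = r * (r ^ 2 + α ^ 2) ^ (p + 1) := by rw [pow_succ]; ring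
      have hre : α ^ (p + 1) * (r / (r ^ 2 + α ^ 2)) = α ^ (p + 1) * r / (r ^ 2 + α ^ 2) := by
        ring
      rw [hre, div_le_div_iff₀ (by positivity) (by positivity)]
      calc α ^ (p + 1) * r ^ (2 * p + 1) * (r ^ 2 + α ^ 2)
          = α ^ (p + 1) * (r ^ (2 * p + 1) * (r ^ 2 + α ^ 2)) := by ring
        _ ≤ α ^ (p + 1) * (r * (r ^ 2 + α ^ 2) ^ (p + 1)) :=
            mul_le_mul_of_nonneg_left key (by positivity)
        _ = α ^ (p + 1) * r * (r ^ 2 + α ^ 2) ^ (p + 1) := by ring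
    have hFTC : (∫ r in (0:ℝ)..ε, r / (r ^ 2 + α ^ 2))
        = 1 / 2 * Real.log (ε ^ 2 + α ^ 2) - 1 / 2 * Real.log ((0:ℝ) ^ 2 + α ^ 2) := by
      apply intervalIntegral.integral_eq_sub_of_hasDerivAt
        (f := fun r => 1 / 2 * Real.log (r ^ 2 + α ^ 2))
      · intro x _
        have h1 : HasDerivAt (fun r : ℝ => r ^ 2 + α ^ 2) (2 * x) x := by
          simpa using (hasDerivAt_pow 2 x).add_const (α ^ 2)
        have h2 := (h1.log (by positivity)).const_mul (1 / 2 : ℝ)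
        convert h2 using 1
        · rfl
        ring
      · have : Continuous fun r : ℝ => r / (r ^ 2 + α ^ 2) := by
          apply Continuous.div continuous_id (by fun_prop)
          intro x; positivity
        exact this.intervalIntegrable 0 ε
    have hlogα2 : Real.log ((0:ℝ) ^ 2 + α ^ 2) = 2 * Real.log α := by
      rw [show (0:ℝ) ^ 2 + α ^ 2 = α ^ (2:ℕ) by norm_num, Real.log_pow]
      norm_num
    have hlogub : Real.log (ε ^ 2 + α ^ 2) ≤ Real.log (1 + ε ^ 2) :=
      Real.log_le_log (by positivity) (by nlinarith)
    have hc1 : Real.log (1 + ε ^ 2) / (2 * Real.log 2) * Real.log 2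
        = Real.log (1 + ε ^ 2) / 2 := by
      field_simp
    have h5 : Real.log (1 + ε ^ 2) / (2 * Real.log 2) * Real.log 2
        ≤ Real.log (1 + ε ^ 2) / (2 * Real.log 2) * -Real.log α := by
      apply mul_le_mul_of_nonneg_left _ (by positivity)
      rw [← hlog1α]; exact hlog2le
    have hinner : 1 / 2 * Real.log (ε ^ 2 + α ^ 2) - 1 / 2 * (2 * Real.log α)
        ≤ Real.log (1 + ε ^ 2) / (2 * Real.log 2) * -Real.log α + -Real.log α := by
      linarith [h5, hc1, hlogub]
    rw [hαpow, hlog1α]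
    calc (∫ r in (0:ℝ)..ε, f r)
        ≤ ∫ r in (0:ℝ)..ε, α ^ (p + 1) * (r / (r ^ 2 + α ^ 2)) := hmono
      _ = α ^ (p + 1) * ∫ r in (0:ℝ)..ε, r / (r ^ 2 + α ^ 2) := by
          rw [intervalIntegral.integral_const_mul]
      _ = α ^ (p + 1) * (1 / 2 * Real.log (ε ^ 2 + α ^ 2) - 1 / 2 * (2 * Real.log α)) := by
          rw [hFTC, hlogα2]
      _ ≤ α ^ (p + 1) * (Real.log (1 + ε ^ 2) / (2 * Real.log 2) * -Real.log α + -Real.log α) :=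
          mul_le_mul_of_nonneg_left hinner (by positivity)
      _ = (Real.log (1 + ε ^ 2) / (2 * Real.log 2) + 1) * α ^ (p + 1) * -Real.log α := by
          ring
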